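/- arXiv:1310.4093 — 4 statements merged into one kernel-verified Lean document; each statement's English description precedes it below -/
import Mathlib

section
/- The edge-weighted hook formula ∑_{T∈U_r} ∏_{v=2}^r ( x_{f_T(v)} ∑_{u∈h_T(v)} y_{v,u} ) = x_1 y_{r,r} ∏_{i=2}^{r−1} ( (∑_{j≤i} x_j) y_{i,i} + ∑_{j>i} x_i y_{i,j} ) specializes, under the substitution y_{v,u} = x_u − 1 for v < u and y_{u,u} = x_u, to the identity ∑_{T∈U_r} ∏_{v=2}^r x_{f_T(v)}((∑_{u∈h_T(v)} x_u) − h_T(v) + 1) = x_1⋯x_r (x_1+⋯+x_r−1)_{r−2}. -/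
open scoped Classical

/-- An unordered increasing tree on the vertex set `{1,…,r}` (vertex `i+1` is
represented by `(i : Fin r)`): a parent function `p` with `p 1 = 1` (index `0`)
and `f_T(v) < v` for every nonroot vertex `v`; the root is `1`. -/
def IncTree (r : ℕ) : Type :=
  {p : Fin r → Fin r // ∀ v : Fin r, (v.val = 0 → p v = v) ∧ (v.val ≠ 0 → p v < v)}

noncomputable instance (r : ℕ) : Fintype (IncTree r) := by
  unfold IncTree; infer_instance

/-- The hook `h_T(v)` of a vertex `v` (as a set): `v` together with all of its
descendants, i.e. all `u` some iterated parent of which is `v`. -/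
noncomputable def hook {r : ℕ} (p : Fin r → Fin r) (v : Fin r) : Finset (Fin r) :=
  Finset.univ.filter (fun u => ∃ k ∈ Finset.range (r + 1), p^[k] u = v)

/-- The indeterminate `x_n`, in `MvPolynomial ℕ ℤ`. -/
noncomputable def x (n : ℕ) : MvPolynomial ℕ ℤ := MvPolynomial.X n

/-- The specialization of the edge weights: `y_{v,u} = x_u - 1` for `v < u`,
and `y_{u,u} = x_u`. -/
noncomputable def Y (v u : ℕ) : MvPolynomial ℕ ℤ := if v = u then x u else x u - 1

lemma mem_hook_self {r : ℕ} (p : Fin r → Fin r) (v : Fin r) : v ∈ hook p v := by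
  unfold hook
  simp only [Finset.mem_filter, Finset.mem_univ, true_and]
  exact ⟨0, by simp, rfl⟩

lemma sum_Y_eq {r : ℕ} (v : Fin r) (s : Finset (Fin r)) (hv : v ∈ s) :
    ∑ u ∈ s, Y (v.val + 1) (u.val + 1)
      = (∑ u ∈ s, x (u.val + 1)) - (s.card : MvPolynomial ℕ ℤ) + 1 := by
  have h : ∀ u ∈ s, Y (v.val + 1) (u.val + 1)
      = (x (u.val + 1) - 1) + (if u = v then 1 else 0) := by
    intro u _
    rcases eq_or_ne u v with h | h
    · subst h; simp [Y]
    · have hne : v.val + 1 ≠ u.val + 1 := by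
        intro hc
        exact h (Fin.ext (by omega))
      simp [Y, hne, h, Fin.val_injective.ne (Ne.symm h)]
  rw [Finset.sum_congr rfl h, Finset.sum_add_distrib, Finset.sum_ite_eq' s v (fun _ => 1),
    if_pos hv, Finset.sum_sub_distrib]
  simp

/-- **Specialization of the edge-weighted hook formula.**  Under the
substitution `y_{v,u} = x_u - 1` (for `v < u`) and `y_{u,u} = x_u`, the
left-hand side of the edge-weighted hook formula becomes the left-hand side of
the hook summation formula `∑_{T∈U_r} ∏_{v=2}^r x_{f_T(v)}((∑_{u∈h_T(v)} x_u) -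
h_T(v) + 1)`, and its right-hand side evaluates to
`x_1 ⋯ x_r (x_1 + ⋯ + x_r - 1)_{r-2}`. -/
theorem edge_weighted_hook_formula_specializes (r : ℕ) (hr : 2 ≤ r) :
    (∑ T : IncTree r,
        ∏ v ∈ Finset.univ.filter (fun v : Fin r => v.val ≠ 0),
          x ((T.val v).val + 1) * ∑ u ∈ hook T.val v, Y (v.val + 1) (u.val + 1)
      = ∑ T : IncTree r,
        ∏ v ∈ Finset.univ.filter (fun v : Fin r => v.val ≠ 0),
          x ((T.val v).val + 1) *
            ((∑ u ∈ hook T.val v, x (u.val + 1)) -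
              ((hook T.val v).card : MvPolynomial ℕ ℤ) + 1)) ∧
    (x 1 * Y r r *
        ∏ i ∈ Finset.Icc 2 (r - 1),
          ((∑ j ∈ Finset.Icc 1 i, x j) * Y i i +
            ∑ j ∈ Finset.Icc (i + 1) r, x i * Y i j)
      = (∏ i ∈ Finset.Icc 1 r, x i) *
          ∏ j ∈ Finset.range (r - 2),
            ((∑ i ∈ Finset.Icc 1 r, x i) - 1 - (j : MvPolynomial ℕ ℤ))) := by
  constructor
  · refine Finset.sum_congr rfl fun T _ => Finset.prod_congr rfl fun v _ => ?_
    rw [sum_Y_eq v _ (mem_hook_self T.val v)]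
  · set S : MvPolynomial ℕ ℤ := ∑ i ∈ Finset.Icc 1 r, x i with hS
    have hYr : Y r r = x r := by simp [Y]
    have hfac : ∀ i ∈ Finset.Icc 2 (r - 1),
        ((∑ j ∈ Finset.Icc 1 i, x j) * Y i i + ∑ j ∈ Finset.Icc (i + 1) r, x i * Y i j)
          = x i * (S - ((r - i : ℕ) : MvPolynomial ℕ ℤ)) := by
      intro i hi
      rw [Finset.mem_Icc] at hi
      have h1 : 1 ≤ i := by omega
      have h2 : i ≤ r := by omega
      have hsplit : Finset.Icc 1 i ∪ Finset.Ioc i r = Finset.Icc 1 r := by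
        ext k
        simp only [Finset.mem_union, Finset.mem_Icc, Finset.mem_Ioc]
        omega
      have hY2 : ∀ j ∈ Finset.Icc (i + 1) r, x i * Y i j = x i * (x j - 1) := by
        intro j hj
        rw [Finset.mem_Icc] at hj
        have : i ≠ j := by omega
        simp [Y, this]
      have hIoc : Finset.Icc (i + 1) r = Finset.Ioc i r := by
        ext k; simp [Finset.mem_Icc, Finset.mem_Ioc]
      have hcard : (Finset.Ioc i r).card = r - i := by
        simp [Nat.card_Ioc]
      have hYii : Y i i = x i := by simp [Y]
      rw [Finset.sum_congr rfl hY2, hYii, ← Finset.mul_sum, hIoc]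
      have hsum : ∑ j ∈ Finset.Ioc i r, (x j - 1)
          = (∑ j ∈ Finset.Ioc i r, x j) - ((r - i : ℕ) : MvPolynomial ℕ ℤ) := by
        rw [Finset.sum_sub_distrib]
        simp [hcard]
      rw [hsum]
      have hSsplit : S = (∑ j ∈ Finset.Icc 1 i, x j) + ∑ j ∈ Finset.Ioc i r, x j := by
        rw [hS, ← hsplit, Finset.sum_union]
        rw [Finset.disjoint_left]
        intro a ha hb
        rw [Finset.mem_Icc] at ha
        rw [Finset.mem_Ioc] at hb
        omega
      rw [hSsplit]; ring
    rw [Finset.prod_congr rfl hfac, Finset.prod_mul_distrib, hYr]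
    have hxprod : x 1 * x r * (∏ i ∈ Finset.Icc 2 (r - 1), x i)
        = ∏ i ∈ Finset.Icc 1 r, x i := by
      have hset : Finset.Icc 1 r = insert 1 (insert r (Finset.Icc 2 (r - 1))) := by
        ext k
        simp only [Finset.mem_Icc, Finset.mem_insert]
        omega
      rw [hset, Finset.prod_insert, Finset.prod_insert]
      · ring
      · simp only [Finset.mem_Icc]; omega
      · simp only [Finset.mem_insert, Finset.mem_Icc]; omega
    have hreindex : ∏ i ∈ Finset.Icc 2 (r - 1), (S - ((r - i : ℕ) : MvPolynomial ℕ ℤ))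
        = ∏ j ∈ Finset.range (r - 2), (S - 1 - (j : MvPolynomial ℕ ℤ)) := by
      refine Finset.prod_bij' (fun i _ => r - 1 - i) (fun j _ => r - 1 - j) ?_ ?_ ?_ ?_ ?_
      · intro i hi
        rw [Finset.mem_Icc] at hi
        rw [Finset.mem_range]
        show r - 1 - i < r - 2
        omega
      · intro j hj
        rw [Finset.mem_range] at hj
        rw [Finset.mem_Icc]
        show 2 ≤ r - 1 - j ∧ r - 1 - j ≤ r - 1
        omega
      · intro i hi
        rw [Finset.mem_Icc] at hi
        show r - 1 - (r - 1 - i) = i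
        omega
      · intro j hj
        rw [Finset.mem_range] at hj
        show r - 1 - (r - 1 - j) = j
        omega
      · intro i hi
        rw [Finset.mem_Icc] at hi
        have h1 : (r - i : ℕ) = (r - 1 - i) + 1 := by omega
        rw [h1]
        push_cast
        ring
    rw [hreindex, ← hxprod]
    ring
end

section
/- Let T_1 and T_2 be unordered increasing trees with disjoint finite vertex sets of positive integers, let v_1 be a vertex of T_1 and v_2 a vertex of T_2 with v_1 > v_2, and let R = splice(T_1, v_1; T_2, v_2). Then for ℓ ∈ {1,2} and any two vertices i, j of T_ℓ, vertex i is an ancestor of j in T_ℓ if and only if i is an ancestor of j in R. -/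
open scoped Classical

/-- An unordered increasing tree on a finite set of positive integers,
given by its vertex set and parent function: the root is the minimum vertex
and is fixed by `parent`, and every nonroot vertex has a parent in the tree
with strictly smaller label (so labels increase away from the root). -/
structure ITree : Type where
  verts : Finset ℕ
  parent : ℕ → ℕ
  pos : ∀ v ∈ verts, 0 < v
  parent_root : ∀ v ∈ verts, (∀ u ∈ verts, v ≤ u) → parent v = v
  parent_lt : ∀ v ∈ verts, ¬(∀ u ∈ verts, v ≤ u) → parent v ∈ verts ∧ parent v < v

/-- `a` is an ancestor of `v` in `T` (this includes `a = v`): some iterate of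
the parent function sends `v` to `a`. -/
def Ancestor (T : ITree) (a v : ℕ) : Prop := ∃ k : ℕ, T.parent^[k] v = a

/-- The chain from the root of `T` to `v`: the set of ancestors of `v`. -/
noncomputable def chain (T : ITree) (v : ℕ) : Finset ℕ :=
  T.verts.filter (fun a => Ancestor T a v)

/-- The number of sons of the vertex `i` in `T`. -/
noncomputable def sons (T : ITree) (i : ℕ) : ℕ :=
  (T.verts.filter (fun v => v ≠ i ∧ T.parent v = i)).card

/-- `R = splice(T₁, v₁; T₂, v₂)`: the increasing tree on the union of the
vertex sets obtained by merging the chain from the root of `T₁` to `v₁` with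
the chain from the root of `T₂` to `v₂` into a single increasing chain
(each chain vertex having as parent its predecessor in the merged chain),
all other vertices keeping their parent.  This is exactly the interleaving of
the `v₁`-decomposition of `T₁` and the `v₂`-decomposition of `T₂` so that the
roots along the resulting chain increase. -/
def IsSplice (T₁ : ITree) (v₁ : ℕ) (T₂ : ITree) (v₂ : ℕ) (R : ITree) : Prop :=
  R.verts = T₁.verts ∪ T₂.verts ∧
  (∀ w ∈ T₁.verts, w ∉ chain T₁ v₁ ∪ chain T₂ v₂ → R.parent w = T₁.parent w) ∧
  (∀ w ∈ T₂.verts, w ∉ chain T₁ v₁ ∪ chain T₂ v₂ → R.parent w = T₂.parent w) ∧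
  (∀ w ∈ chain T₁ v₁ ∪ chain T₂ v₂,
    ∀ h : ((chain T₁ v₁ ∪ chain T₂ v₂).filter (· < w)).Nonempty,
      R.parent w = ((chain T₁ v₁ ∪ chain T₂ v₂).filter (· < w)).max' h)

lemma anc_refl (T : ITree) (v : ℕ) : Ancestor T v v := ⟨0, rfl⟩

lemma anc_trans {T : ITree} {a b c : ℕ} (h1 : Ancestor T a b) (h2 : Ancestor T b c) :
    Ancestor T a c := by
  obtain ⟨k, hk⟩ := h1; obtain ⟨m, hm⟩ := h2
  exact ⟨k + m, by rw [Function.iterate_add_apply, hm, hk]⟩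

lemma anc_parent (T : ITree) (v : ℕ) : Ancestor T (T.parent v) v :=
  ⟨1, by simp⟩

lemma parent_mem_le (T : ITree) {v : ℕ} (hv : v ∈ T.verts) :
    T.parent v ∈ T.verts ∧ T.parent v ≤ v := by
  by_cases h : ∀ u ∈ T.verts, v ≤ u
  · rw [T.parent_root v hv h]; exact ⟨hv, le_refl v⟩
  · exact ⟨(T.parent_lt v hv h).1, le_of_lt (T.parent_lt v hv h).2⟩

lemma anc_mem_le {T : ITree} {a v : ℕ} (hv : v ∈ T.verts) (h : Ancestor T a v) :
    a ∈ T.verts ∧ a ≤ v := by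
  obtain ⟨k, hk⟩ := h
  induction k generalizing v with
  | zero => exact hk ▸ ⟨hv, le_refl _⟩
  | succ n ih =>
    rw [Function.iterate_succ_apply] at hk
    obtain ⟨hm, hle⟩ := parent_mem_le T hv
    obtain ⟨h1, h2⟩ := ih hm hk
    exact ⟨h1, le_trans h2 hle⟩

lemma anc_linear {T : ITree} {a b v : ℕ} (ha : Ancestor T a v) (hb : Ancestor T b v) :
    Ancestor T a b ∨ Ancestor T b a := by
  obtain ⟨k, hk⟩ := ha; obtain ⟨m, hm⟩ := hb
  rcases le_total k m with h | h
  · right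
    exact ⟨m - k, by rw [← hk, ← Function.iterate_add_apply, Nat.sub_add_cancel h, hm]⟩
  · left
    exact ⟨k - m, by rw [← hm, ← Function.iterate_add_apply, Nat.sub_add_cancel h, hk]⟩

lemma chain_order {T : ITree} {v a b : ℕ} (ha : a ∈ chain T v) (hb : b ∈ chain T v)
    (hab : a ≤ b) : Ancestor T a b := by
  rw [chain, Finset.mem_filter] at ha hb
  rcases anc_linear ha.2 hb.2 with h | h
  · exact h
  · have hba : b ≤ a := (anc_mem_le ha.1 h).2
    have : a = b := le_antisymm hab hba
    rw [this]; exact anc_refl T b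

lemma chain_parent {T : ITree} {v w : ℕ} (hw : w ∈ chain T v) : T.parent w ∈ chain T v := by
  rw [chain, Finset.mem_filter] at hw ⊢
  obtain ⟨hwv, m, hm⟩ := hw
  exact ⟨(parent_mem_le T hwv).1, m + 1, by rw [Function.iterate_succ_apply', hm]⟩

lemma root_anc (T : ITree) {j : ℕ} (hj : j ∈ T.verts) (hne : T.verts.Nonempty) :
    Ancestor T (T.verts.min' hne) j := by
  induction j using Nat.strong_induction_on with
  | _ j ih =>
    by_cases h : ∀ u ∈ T.verts, j ≤ u
    · have hje : j = T.verts.min' hne :=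
        le_antisymm (h _ (T.verts.min'_mem hne)) (T.verts.min'_le j hj)
      rw [← hje]; exact anc_refl T j
    · obtain ⟨hm, hlt⟩ := T.parent_lt j hj h
      exact anc_trans (ih _ hlt hm) (anc_parent T j)

/-- The key symmetric lemma: if `R` restricts to `T` off the merged chain `C`
and follows the predecessor-in-`C` rule on `C`, then ancestry within `T` is
preserved. -/
lemma splice_aux (T A R : ITree) (C : Finset ℕ) (v u : ℕ)
    (hdisj : Disjoint T.verts A.verts)
    (hv : v ∈ T.verts) (hu : u ∈ A.verts)
    (hCdef : C = chain T v ∪ chain A u)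
    (hverts : R.verts = T.verts ∪ A.verts)
    (hoff : ∀ w ∈ T.verts, w ∉ C → R.parent w = T.parent w)
    (hchain : ∀ w ∈ C, ∀ h : (C.filter (· < w)).Nonempty,
        R.parent w = (C.filter (· < w)).max' h) :
    ∀ i ∈ T.verts, ∀ j ∈ T.verts, (Ancestor T i j ↔ Ancestor R i j) := by
  have hTne : T.verts.Nonempty := ⟨v, hv⟩
  have hAne : A.verts.Nonempty := ⟨u, hu⟩
  have hCT : chain T v ⊆ C := by rw [hCdef]; exact Finset.subset_union_left
  have hCA : chain A u ⊆ C := by rw [hCdef]; exact Finset.subset_union_right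
  have hCcases : ∀ w ∈ C, w ∈ chain T v ∨ w ∈ chain A u := fun w hw =>
    Finset.mem_union.1 (hCdef ▸ hw)
  have hchainT : chain T v ⊆ T.verts := Finset.filter_subset _ _
  have hchainA : chain A u ⊆ A.verts := Finset.filter_subset _ _
  have TA_not : ∀ {w}, w ∈ T.verts → w ∉ A.verts := fun h => Finset.disjoint_left.1 hdisj h
  have hCR : C ⊆ R.verts := by
    rw [hCdef, hverts]
    exact Finset.union_subset_union hchainT hchainA
  -- root of T is in chain T v
  have hrootT : T.verts.min' hTne ∈ chain T v := by
    rw [chain, Finset.mem_filter]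
    exact ⟨T.verts.min'_mem hTne, root_anc T hv hTne⟩
  have hrootA : A.verts.min' hAne ∈ chain A u := by
    rw [chain, Finset.mem_filter]
    exact ⟨A.verts.min'_mem hAne, root_anc A hu hAne⟩
  -- if no smaller element in C, then w is the root of R
  have hmin : ∀ w ∈ C, ¬(C.filter (· < w)).Nonempty → R.parent w = w := by
    intro w hw hne
    have hle : ∀ c ∈ C, w ≤ c := by
      intro c hc
      by_contra hcon
      exact hne ⟨c, Finset.mem_filter.2 ⟨hc, by omega⟩⟩
    refine R.parent_root w (hCR hw) ?_
    intro y hy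
    rw [hverts, Finset.mem_union] at hy
    rcases hy with hy | hy
    · exact le_trans (hle _ (hCT hrootT)) (T.verts.min'_le y hy)
    · exact le_trans (hle _ (hCA hrootA)) (A.verts.min'_le y hy)
  -- descent along the merged chain in R
  have hdesc : ∀ w, w ∈ C → ∀ c ∈ C, c ≤ w → Ancestor R c w := by
    intro w
    induction w using Nat.strong_induction_on with
    | _ w ih =>
      intro hw c hc hcw
      rcases eq_or_lt_of_le hcw with rfl | hlt
      · exact anc_refl R c
      · have hne : (C.filter (· < w)).Nonempty := ⟨c, Finset.mem_filter.2 ⟨hc, hlt⟩⟩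
        have hw'mem := (C.filter (· < w)).max'_mem hne
        rw [Finset.mem_filter] at hw'mem
        have hcle : c ≤ (C.filter (· < w)).max' hne :=
          (C.filter (· < w)).le_max' c (Finset.mem_filter.2 ⟨hc, hlt⟩)
        have hpw : R.parent w = (C.filter (· < w)).max' hne := hchain w hw hne
        refine anc_trans (ih _ hw'mem.2 hw'mem.1 c hc hcle) ?_
        rw [← hpw]; exact anc_parent R w
  -- forward direction
  have hfwd : ∀ k, ∀ j ∈ T.verts, Ancestor R (T.parent^[k] j) j := by
    intro k
    induction k with
    | zero => intro j hj; exact anc_refl R j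
    | succ n ih =>
      intro j hj
      rw [Function.iterate_succ_apply]
      by_cases hroot : ∀ y ∈ T.verts, j ≤ y
      · rw [T.parent_root j hj hroot]; exact ih j hj
      · obtain ⟨hpm, hplt⟩ := T.parent_lt j hj hroot
        refine anc_trans (ih (T.parent j) hpm) ?_
        by_cases hjC : j ∈ C
        · have hjT : j ∈ chain T v := by
            rcases hCcases j hjC with h | h
            · exact h
            · exact absurd (hchainA h) (TA_not hj)
          exact hdesc j hjC (T.parent j) (hCT (chain_parent hjT)) (le_of_lt hplt)
        · rw [← hoff j hj hjC]; exact anc_parent R j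
  -- backward invariant
  have hbwd : ∀ j ∈ T.verts, ∀ k,
      (R.parent^[k] j ∈ T.verts ∧ Ancestor T (R.parent^[k] j) j) ∨
      (R.parent^[k] j ∈ chain A u ∧
        ∀ c ∈ chain T v, c < R.parent^[k] j → Ancestor T c j) := by
    intro j hj k
    induction k with
    | zero => exact Or.inl ⟨hj, anc_refl T j⟩
    | succ n ih =>
      rw [Function.iterate_succ_apply']
      set w := R.parent^[n] j with hwdef
      rcases ih with ⟨hwT, hwanc⟩ | ⟨hwA, hH⟩
      · by_cases hwC : w ∈ C
        · have hwchain : w ∈ chain T v := by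
            rcases hCcases w hwC with h | h
            · exact h
            · exact absurd (hchainA h) (TA_not hwT)
          by_cases hne : (C.filter (· < w)).Nonempty
          · rw [hchain w hwC hne]
            have hw'mem := (C.filter (· < w)).max'_mem hne
            rw [Finset.mem_filter] at hw'mem
            obtain ⟨hw'C, hw'lt⟩ := hw'mem
            rcases hCcases _ hw'C with hT | hA
            · exact Or.inl ⟨hchainT hT,
                anc_trans (chain_order hT hwchain (le_of_lt hw'lt)) hwanc⟩
            · refine Or.inr ⟨hA, fun c hc hclt => ?_⟩
              exact anc_trans (chain_order hc hwchain (by omega)) hwanc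
          · rw [hmin w hwC hne]; exact Or.inl ⟨hwT, hwanc⟩
        · rw [hoff w hwT hwC]
          by_cases hroot : ∀ y ∈ T.verts, w ≤ y
          · rw [T.parent_root w hwT hroot]; exact Or.inl ⟨hwT, hwanc⟩
          · exact Or.inl ⟨(T.parent_lt w hwT hroot).1,
              anc_trans (anc_parent T w) hwanc⟩
      · have hwC : w ∈ C := hCA hwA
        by_cases hne : (C.filter (· < w)).Nonempty
        · rw [hchain w hwC hne]
          have hw'mem := (C.filter (· < w)).max'_mem hne
          rw [Finset.mem_filter] at hw'mem
          obtain ⟨hw'C, hw'lt⟩ := hw'mem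
          rcases hCcases _ hw'C with hT | hA
          · exact Or.inl ⟨hchainT hT, hH _ hT hw'lt⟩
          · exact Or.inr ⟨hA, fun c hc hclt => hH c hc (by omega)⟩
        · rw [hmin w hwC hne]; exact Or.inr ⟨hwA, hH⟩
  intro i hi j hj
  constructor
  · rintro ⟨k, hk⟩
    rw [← hk]
    exact hfwd k j hj
  · rintro ⟨k, hk⟩
    rcases hbwd j hj k with ⟨_, h⟩ | ⟨hmem, _⟩
    · rwa [hk] at h
    · rw [hk] at hmem
      exact absurd (hchainA hmem) (TA_not hi)

/-- **Lemma 2.4(a) of Féray–Goulden–Lascoux (ancestor preservation).**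
Let `T₁`, `T₂` be unordered increasing trees with disjoint vertex sets,
`v₁` a vertex of `T₁` and `v₂` a vertex of `T₂` with `v₁ > v₂`, and let
`R = splice(T₁, v₁; T₂, v₂)`.  Then for `ℓ ∈ {1,2}` and any two vertices
`i, j` of `T_ℓ`, `i` is an ancestor of `j` in `T_ℓ` if and only if `i` is an
ancestor of `j` in `R`. -/
theorem splice_preserves_ancestors (T₁ T₂ R : ITree) (v₁ v₂ : ℕ)
    (hdisj : Disjoint T₁.verts T₂.verts)
    (hv₁ : v₁ ∈ T₁.verts) (hv₂ : v₂ ∈ T₂.verts) (hlt : v₂ < v₁)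
    (hspl : IsSplice T₁ v₁ T₂ v₂ R) :
    (∀ i ∈ T₁.verts, ∀ j ∈ T₁.verts, (Ancestor T₁ i j ↔ Ancestor R i j)) ∧
    (∀ i ∈ T₂.verts, ∀ j ∈ T₂.verts, (Ancestor T₂ i j ↔ Ancestor R i j)) := by
  obtain ⟨hverts, hoff₁, hoff₂, hchain⟩ := hspl
  constructor
  · exact splice_aux T₁ T₂ R (chain T₁ v₁ ∪ chain T₂ v₂) v₁ v₂ hdisj hv₁ hv₂ rfl
      hverts hoff₁ hchain
  · exact splice_aux T₂ T₁ R (chain T₁ v₁ ∪ chain T₂ v₂) v₂ v₁ hdisj.symm hv₂ hv₁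
      (Finset.union_comm _ _) (by rw [hverts, Finset.union_comm]) hoff₂ hchain
end

section
/- The splice operation is vertex-set recoverable: if R = splice(T_1, v_1; T_2, v_2) with v_1 the maximum vertex of T_1, then given R, the vertex set V(T_1), and V(T_2) = V(R) \ V(T_1), the trees T_1 and T_2 and the vertex v_2 are uniquely determined; specifically, v_2 is the first element of V(T_2) on the chain from v_1 to the root of R, and T_1, T_2 are determined by their v_1- and v_2-decompositions, which are the pieces of the v_1-decomposition of R with roots in V(T_1), respectively V(T_2). -/
open scoped Classical

lemma iter_mem (T : ITree) {v : ℕ} (hv : v ∈ T.verts) (k : ℕ) :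
    T.parent^[k] v ∈ T.verts := by
  induction k with
  | zero => simpa
  | succ k ih =>
    rw [Function.iterate_succ_apply']
    by_cases h : ∀ u ∈ T.verts, T.parent^[k] v ≤ u
    · rw [T.parent_root _ ih h]; exact ih
    · exact (T.parent_lt _ ih h).1

lemma parent_le (T : ITree) {v : ℕ} (hv : v ∈ T.verts) : T.parent v ≤ v := by
  by_cases h : ∀ u ∈ T.verts, v ≤ u
  · rw [T.parent_root _ hv h]
  · exact (T.parent_lt _ hv h).2.le

lemma iter_le (T : ITree) {v : ℕ} (hv : v ∈ T.verts) (k : ℕ) :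
    T.parent^[k] v ≤ v := by
  induction k with
  | zero => simp
  | succ k ih =>
    rw [Function.iterate_succ_apply']
    exact le_trans (parent_le T (iter_mem T hv k)) ih

lemma chain_subset (T : ITree) (v : ℕ) : chain T v ⊆ T.verts :=
  Finset.filter_subset _ _

lemma mem_chain_of_ancestor (T : ITree) {v a : ℕ} (hv : v ∈ T.verts)
    (h : Ancestor T a v) : a ∈ chain T v := by
  obtain ⟨k, hk⟩ := h
  exact Finset.mem_filter.2 ⟨hk ▸ iter_mem T hv k, ⟨k, hk⟩⟩

lemma self_mem_chain (T : ITree) {v : ℕ} (hv : v ∈ T.verts) : v ∈ chain T v :=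
  mem_chain_of_ancestor T hv ⟨0, rfl⟩

lemma le_of_mem_chain (T : ITree) {v a : ℕ} (hv : v ∈ T.verts)
    (ha : a ∈ chain T v) : a ≤ v := by
  obtain ⟨-, k, hk⟩ := Finset.mem_filter.1 ha
  exact hk ▸ iter_le T hv k

lemma reach_min (T : ITree) {m : ℕ} (hm : m ∈ T.verts)
    (hmin : ∀ u ∈ T.verts, m ≤ u) :
    ∀ w, w ∈ T.verts → ∃ k, T.parent^[k] w = m := by
  intro w
  induction w using Nat.strong_induction_on with
  | _ w ih =>
    intro hw
    by_cases h : ∀ u ∈ T.verts, w ≤ u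
    · exact ⟨0, le_antisymm (h m hm) (hmin w hw)⟩
    · obtain ⟨hp, hplt⟩ := T.parent_lt _ hw h
      obtain ⟨k, hk⟩ := ih _ hplt hp
      exact ⟨k + 1, by rw [Function.iterate_succ_apply]; exact hk⟩

lemma bot_mem_chain (T : ITree) {v m : ℕ} (hv : v ∈ T.verts) (hm : m ∈ T.verts)
    (hmin : ∀ u ∈ T.verts, m ≤ u) : m ∈ chain T v :=
  mem_chain_of_ancestor T hv (reach_min T hm hmin v hv)

/-- On the chain, the parent of `w` is an upper bound for all chain elements below `w`. -/
lemma chain_parent_spec (T : ITree) {v w c : ℕ} (hv : v ∈ T.verts)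
    (hw : w ∈ chain T v) (hc : c ∈ chain T v) (hcw : c < w) :
    T.parent w ∈ chain T v ∧ T.parent w < w ∧ c ≤ T.parent w := by
  obtain ⟨hwv, j, hj⟩ := Finset.mem_filter.1 hw
  obtain ⟨hcv, k, hk⟩ := Finset.mem_filter.1 hc
  have hnotmin : ¬ ∀ u ∈ T.verts, w ≤ u := fun h => absurd (h c hcv) (not_le.2 hcw)
  obtain ⟨hpmem, hplt⟩ := T.parent_lt _ hwv hnotmin
  have hjk : j < k := by
    by_contra h
    push_neg at h
    obtain ⟨d, rfl⟩ := Nat.exists_eq_add_of_le h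
    have := iter_le T (hk ▸ iter_mem T hv k) d
    rw [add_comm, Function.iterate_add_apply, hk] at hj
    omega
  have hpc : T.parent w = T.parent^[j+1] v := by
    rw [Function.iterate_succ_apply', hj]
  have hchain : T.parent w ∈ chain T v :=
    mem_chain_of_ancestor T hv ⟨j + 1, hpc.symm⟩
  refine ⟨hchain, hplt, ?_⟩
  obtain ⟨e, he⟩ : ∃ e, k = (j + 1) + e := ⟨k - (j+1), by omega⟩
  have : T.parent^[k] v = T.parent^[e] (T.parent^[j+1] v) := by
    rw [he, add_comm, Function.iterate_add_apply]
  rw [hk, ← hpc] at this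
  exact this ▸ iter_le T hpmem e

lemma splice_ancestors (T₁ T₂ R : ITree) (v₁ v₂ : ℕ)
    (hv₁ : v₁ ∈ T₁.verts) (hv₂ : v₂ ∈ T₂.verts) (hlt : v₂ < v₁)
    (hspl : IsSplice T₁ v₁ T₂ v₂ R) :
    ∀ a, Ancestor R a v₁ ↔ a ∈ chain T₁ v₁ ∪ chain T₂ v₂ := by
  set M := chain T₁ v₁ ∪ chain T₂ v₂ with hM
  have hMle : ∀ m ∈ M, m ≤ v₁ := by
    intro m hm
    rcases Finset.mem_union.1 hm with h | h
    · exact le_of_mem_chain T₁ hv₁ h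
    · exact le_trans (le_of_mem_chain T₂ hv₂ h) hlt.le
  have hv₁M : v₁ ∈ M := Finset.mem_union_left _ (self_mem_chain T₁ hv₁)
  have hMverts : ∀ m ∈ M, m ∈ R.verts := by
    intro m hm
    rw [hspl.1]
    rcases Finset.mem_union.1 hm with h | h
    · exact Finset.mem_union_left _ (chain_subset T₁ v₁ h)
    · exact Finset.mem_union_right _ (chain_subset T₂ v₂ h)
  -- the step: R.parent maps M into M
  have step : ∀ m ∈ M, R.parent m ∈ M := by
    intro m hm
    by_cases hF : (M.filter (· < m)).Nonempty
    · rw [hspl.2.2.2 m hm hF]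
      exact Finset.mem_of_mem_filter _ (Finset.max'_mem _ hF)
    · have hlow : ∀ c ∈ M, m ≤ c := by
        intro c hc
        by_contra h
        exact hF ⟨c, Finset.mem_filter.2 ⟨hc, by simpa using not_le.1 h⟩⟩
      have hmin : ∀ u ∈ R.verts, m ≤ u := by
        intro u hu
        rw [hspl.1] at hu
        rcases Finset.mem_union.1 hu with h | h
        · have h1 : T₁.verts.min' ⟨v₁, hv₁⟩ ∈ M :=
            Finset.mem_union_left _
              (bot_mem_chain T₁ hv₁ (T₁.verts.min'_mem _) (fun u hu => T₁.verts.min'_le u hu))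
          exact le_trans (hlow _ h1) (T₁.verts.min'_le u h)
        · have h2 : T₂.verts.min' ⟨v₂, hv₂⟩ ∈ M :=
            Finset.mem_union_right _
              (bot_mem_chain T₂ hv₂ (T₂.verts.min'_mem _) (fun u hu => T₂.verts.min'_le u hu))
          exact le_trans (hlow _ h2) (T₂.verts.min'_le u h)
      rw [R.parent_root m (hMverts m hm) hmin]
      exact hm
  intro a
  constructor
  · rintro ⟨k, rfl⟩
    induction k with
    | zero => simpa using hv₁M
    | succ k ih =>
      rw [Function.iterate_succ_apply']
      exact step _ ih
  · -- downward induction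
    intro ha
    have key : ∀ n m, m ∈ M → v₁ - m ≤ n → Ancestor R m v₁ := by
      intro n
      induction n with
      | zero =>
        intro m hm hn
        have := hMle m hm
        have : m = v₁ := by omega
        exact this ▸ ⟨0, rfl⟩
      | succ n ih =>
        intro m hm hn
        by_cases hmv : m = v₁
        · exact hmv ▸ ⟨0, rfl⟩
        · have hmlt : m < v₁ := lt_of_le_of_ne (hMle m hm) hmv
          have hS : (M.filter (m < ·)).Nonempty :=
            ⟨v₁, Finset.mem_filter.2 ⟨hv₁M, by simpa using hmlt⟩⟩
          set m' := (M.filter (m < ·)).min' hS with hm'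
          obtain ⟨hm'M, hm'gt⟩ := Finset.mem_filter.1 ((M.filter (m < ·)).min'_mem hS)
          have hm'le : m' ≤ v₁ := hMle m' hm'M
          have hanc' : Ancestor R m' v₁ := ih m' hm'M (by omega)
          have hF : (M.filter (· < m')).Nonempty :=
            ⟨m, Finset.mem_filter.2 ⟨hm, hm'gt⟩⟩
          have hpar : R.parent m' = m := by
            rw [hspl.2.2.2 m' hm'M hF]
            apply le_antisymm
            · obtain ⟨hmaxM, hmaxlt⟩ := Finset.mem_filter.1 ((M.filter (· < m')).max'_mem hF)
              by_contra h
              push_neg at h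
              have : m' ≤ (M.filter (· < m')).max' hF :=
                (M.filter (m < ·)).min'_le _ (Finset.mem_filter.2 ⟨hmaxM, by simpa using h⟩)
              omega
            · exact Finset.le_max' (M.filter (· < m')) m (Finset.mem_filter.2 ⟨hm, hm'gt⟩)
          obtain ⟨k, hk⟩ := hanc'
          exact ⟨k + 1, by rw [Function.iterate_succ_apply', hk, hpar]⟩
    exact key (v₁ - a) a ha le_rfl

/-- **Vertex-set recoverability of the splice.**  Suppose
`R = splice(T₁, v₁; T₂, v₂)` where `v₁` is the maximum vertex of `T₁`,
`v₂ ∈ T₂`, `v₂ < v₁`, and the vertex sets are disjoint.  Then, given `R`,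
the vertex set `V(T₁)` (and hence `V(T₂) = V(R) \ V(T₁)`), the trees `T₁`,
`T₂` and the vertex `v₂` are uniquely determined: any other splice
decomposition of `R` along `v₁` with the same vertex sets agrees with
`(T₁, T₂, v₂)`.  Specifically, `v₂` is the first element of `V(T₂)` on the
chain from `v₁` to the root of `R` (the largest element of `V(T₂)` that is an
ancestor of `v₁` in `R`), and `T₁`, `T₂` are determined by their `v₁`- and
`v₂`-decompositions, the pieces of the `v₁`-decomposition of `R` with roots
in `V(T₁)`, resp. `V(T₂)`. -/
theorem splice_unique_recovery (T₁ T₂ R : ITree) (v₁ v₂ : ℕ)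
    (hdisj : Disjoint T₁.verts T₂.verts)
    (hv₁ : v₁ ∈ T₁.verts) (hmax : ∀ u ∈ T₁.verts, u ≤ v₁)
    (hv₂ : v₂ ∈ T₂.verts) (hlt : v₂ < v₁)
    (hspl : IsSplice T₁ v₁ T₂ v₂ R) :
    (∀ (T₁' T₂' : ITree) (v₂' : ℕ),
      T₁'.verts = T₁.verts → T₂'.verts = T₂.verts →
      v₂' ∈ T₂'.verts → v₂' < v₁ → IsSplice T₁' v₁ T₂' v₂' R →
        (∀ w ∈ T₁.verts, T₁'.parent w = T₁.parent w) ∧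
        (∀ w ∈ T₂.verts, T₂'.parent w = T₂.parent w) ∧ v₂' = v₂) ∧
    (Ancestor R v₂ v₁ ∧ ∀ w ∈ T₂.verts, Ancestor R w v₁ → w ≤ v₂) := by
  have hanc := splice_ancestors T₁ T₂ R v₁ v₂ hv₁ hv₂ hlt hspl
  have hC₁sub := chain_subset T₁ v₁
  have hC₂sub := chain_subset T₂ v₂
  constructor
  · rintro T₁' T₂' v₂' hT₁' hT₂' hv₂' hlt' hspl'
    have hv₁' : v₁ ∈ T₁'.verts := by rw [hT₁']; exact hv₁
    have hanc' := splice_ancestors T₁' T₂' R v₁ v₂' hv₁' hv₂' hlt' hspl'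
    have hMM : chain T₁' v₁ ∪ chain T₂' v₂' = chain T₁ v₁ ∪ chain T₂ v₂ := by
      ext a
      rw [← hanc' a, hanc a]
    have hC₁ : chain T₁' v₁ = chain T₁ v₁ := by
      ext a
      constructor
      · intro h
        have haM : a ∈ chain T₁ v₁ ∪ chain T₂ v₂ := by
          rw [← hMM]; exact Finset.mem_union_left _ h
        have haT₁ : a ∈ T₁.verts := by
          rw [← hT₁']; exact chain_subset T₁' v₁ h
        rcases Finset.mem_union.1 haM with h' | h'
        · exact h'
        · exact absurd (hC₂sub h') (Finset.disjoint_left.1 hdisj haT₁)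
      · intro h
        have haM' : a ∈ chain T₁' v₁ ∪ chain T₂' v₂' := by
          rw [hMM]; exact Finset.mem_union_left _ h
        have haT₁ : a ∈ T₁.verts := hC₁sub h
        rcases Finset.mem_union.1 haM' with h' | h'
        · exact h'
        · have : a ∈ T₂.verts := by rw [← hT₂']; exact chain_subset T₂' v₂' h'
          exact absurd this (Finset.disjoint_left.1 hdisj haT₁)
    have hC₂ : chain T₂' v₂' = chain T₂ v₂ := by
      ext a
      constructor
      · intro h
        have haM : a ∈ chain T₁ v₁ ∪ chain T₂ v₂ := by
          rw [← hMM]; exact Finset.mem_union_right _ h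
        have haT₂ : a ∈ T₂.verts := by
          rw [← hT₂']; exact chain_subset T₂' v₂' h
        rcases Finset.mem_union.1 haM with h' | h'
        · exact absurd (hC₁sub h') (Finset.disjoint_right.1 hdisj haT₂)
        · exact h'
      · intro h
        have haM' : a ∈ chain T₁' v₁ ∪ chain T₂' v₂' := by
          rw [hMM]; exact Finset.mem_union_right _ h
        have haT₂ : a ∈ T₂.verts := hC₂sub h
        rcases Finset.mem_union.1 haM' with h' | h'
        · have : a ∈ T₁.verts := by rw [← hT₁']; exact chain_subset T₁' v₁ h'
          exact absurd this (Finset.disjoint_right.1 hdisj haT₂)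
        · exact h'
    have hv₂eq : v₂' = v₂ := by
      refine le_antisymm ?_ ?_
      · exact le_of_mem_chain T₂ hv₂ (hC₂ ▸ self_mem_chain T₂' hv₂')
      · exact le_of_mem_chain T₂' hv₂' (hC₂.symm ▸ self_mem_chain T₂ hv₂)
    refine ⟨?_, ?_, hv₂eq⟩
    · intro w hw
      by_cases hwM : w ∈ chain T₁ v₁ ∪ chain T₂ v₂
      · have hwC₁ : w ∈ chain T₁ v₁ := by
          rcases Finset.mem_union.1 hwM with h | h
          · exact h
          · exact absurd (hC₂sub h) (Finset.disjoint_left.1 hdisj hw)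
        have hwC₁' : w ∈ chain T₁' v₁ := hC₁.symm ▸ hwC₁
        by_cases hmin : ∀ u ∈ T₁.verts, w ≤ u
        · rw [T₁.parent_root w hw hmin,
            T₁'.parent_root w (by rw [hT₁']; exact hw)
              (fun u hu => hmin u (by rw [← hT₁']; exact hu))]
        · push_neg at hmin
          obtain ⟨u, hu, hulf⟩ := hmin
          have hm₁mem : T₁.verts.min' ⟨v₁, hv₁⟩ ∈ T₁.verts := Finset.min'_mem _ _
          have hm₁min : ∀ x ∈ T₁.verts, T₁.verts.min' ⟨v₁, hv₁⟩ ≤ x :=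
            fun x hx => Finset.min'_le _ x hx
          have hm₁lt : T₁.verts.min' ⟨v₁, hv₁⟩ < w := lt_of_le_of_lt (hm₁min u hu) hulf
          have hm₁C₁ : T₁.verts.min' ⟨v₁, hv₁⟩ ∈ chain T₁ v₁ :=
            bot_mem_chain T₁ hv₁ hm₁mem hm₁min
          have hm₁C₁' : T₁.verts.min' ⟨v₁, hv₁⟩ ∈ chain T₁' v₁ := hC₁.symm ▸ hm₁C₁
          have s1 := chain_parent_spec T₁ hv₁ hwC₁ hm₁C₁ hm₁lt
          have s2 := chain_parent_spec T₁' hv₁' hwC₁' hm₁C₁' hm₁lt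
          have h12 := (chain_parent_spec T₁ hv₁ hwC₁ (hC₁ ▸ s2.1) s2.2.1).2.2
          have h21 := (chain_parent_spec T₁' hv₁' hwC₁' (hC₁.symm ▸ s1.1) s1.2.1).2.2
          exact le_antisymm h12 h21
      · have hwM' : w ∉ chain T₁' v₁ ∪ chain T₂' v₂' := by rw [hMM]; exact hwM
        rw [← hspl'.2.1 w (by rw [hT₁']; exact hw) hwM', hspl.2.1 w hw hwM]
    · intro w hw
      by_cases hwM : w ∈ chain T₁ v₁ ∪ chain T₂ v₂
      · have hwC₂ : w ∈ chain T₂ v₂ := by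
          rcases Finset.mem_union.1 hwM with h | h
          · exact absurd (hC₁sub h) (Finset.disjoint_right.1 hdisj hw)
          · exact h
        have hwC₂' : w ∈ chain T₂' v₂' := hC₂.symm ▸ hwC₂
        by_cases hmin : ∀ u ∈ T₂.verts, w ≤ u
        · rw [T₂.parent_root w hw hmin,
            T₂'.parent_root w (by rw [hT₂']; exact hw)
              (fun u hu => hmin u (by rw [← hT₂']; exact hu))]
        · push_neg at hmin
          obtain ⟨u, hu, hulf⟩ := hmin
          have hm₂mem : T₂.verts.min' ⟨v₂, hv₂⟩ ∈ T₂.verts := Finset.min'_mem _ _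
          have hm₂min : ∀ x ∈ T₂.verts, T₂.verts.min' ⟨v₂, hv₂⟩ ≤ x :=
            fun x hx => Finset.min'_le _ x hx
          have hm₂lt : T₂.verts.min' ⟨v₂, hv₂⟩ < w := lt_of_le_of_lt (hm₂min u hu) hulf
          have hm₂C₂ : T₂.verts.min' ⟨v₂, hv₂⟩ ∈ chain T₂ v₂ :=
            bot_mem_chain T₂ hv₂ hm₂mem hm₂min
          have hm₂C₂' : T₂.verts.min' ⟨v₂, hv₂⟩ ∈ chain T₂' v₂' := hC₂.symm ▸ hm₂C₂
          have s1 := chain_parent_spec T₂ hv₂ hwC₂ hm₂C₂ hm₂lt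
          have s2 := chain_parent_spec T₂' hv₂' hwC₂' hm₂C₂' hm₂lt
          have h12 := (chain_parent_spec T₂ hv₂ hwC₂ (hC₂ ▸ s2.1) s2.2.1).2.2
          have h21 := (chain_parent_spec T₂' hv₂' hwC₂' (hC₂.symm ▸ s1.1) s1.2.1).2.2
          exact le_antisymm h12 h21
      · have hwM' : w ∉ chain T₁' v₁ ∪ chain T₂' v₂' := by rw [hMM]; exact hwM
        rw [← hspl'.2.2.1 w (by rw [hT₂']; exact hw) hwM', hspl.2.2.1 w hw hwM]
  · refine ⟨(hanc v₂).2 (Finset.mem_union_right _ (self_mem_chain T₂ hv₂)), ?_⟩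
    intro w hw hancw
    rcases Finset.mem_union.1 ((hanc w).1 hancw) with h | h
    · exact absurd (hC₁sub h) (Finset.disjoint_right.1 hdisj hw)
    · exact le_of_mem_chain T₂ hv₂ h
end

section
/- Let π be a partition of a set of positive integers with {1} as a block, and let T be a π-increasing tree whose vertex set contains 1 and has at least two elements, with maximum vertex M. Then the blocks {1} and π^M (the block containing M) lie in different connected components of the M-dependence graph G_M(T); in particular, T is reducible. -/
open scoped Classical

/-- `π` is a set partition of a set of positive integers: its blocks are
nonempty, consist of positive integers, and are pairwise disjoint. -/
def IsPartition (π : Finset (Finset ℕ)) : Prop :=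
  (∀ B ∈ π, B.Nonempty) ∧ (∀ B ∈ π, ∀ b ∈ B, 0 < b) ∧
    (∀ B ∈ π, ∀ B' ∈ π, B ≠ B' → Disjoint B B')

/-- `T` is a `π`-increasing tree: its vertex set is a union of blocks of `π`,
and every block contained in the vertex set forms a chain of ancestors in `T`
(for `i < j` in the same block, `i` is an ancestor of `j`). -/
def PiIncreasing (π : Finset (Finset ℕ)) (T : ITree) : Prop :=
  (∀ v ∈ T.verts, ∃ B ∈ π, v ∈ B ∧ B ⊆ T.verts) ∧
  (∀ B ∈ π, B ⊆ T.verts → ∀ i ∈ B, ∀ j ∈ B, i ≤ j → Ancestor T i j)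

/-- The edge relation of the `v`-dependence graph `G_v(T)` (on the blocks of
`π` contained in `V(T)`): there is an edge from `B` to `B'` when the maximum
`μ` of `B` does not lie on the chain from the root of `T` to `v`, and the
piece of the `v`-decomposition of `T` containing `μ` (as a nonroot vertex) is
rooted at a vertex `a ∈ B'`; the root `a` of that piece is the largest
ancestor of `v` which is also an ancestor of `μ`. -/
def DepEdge (π : Finset (Finset ℕ)) (T : ITree) (v : ℕ) (B B' : Finset ℕ) : Prop :=
  B ∈ π ∧ B' ∈ π ∧ B ⊆ T.verts ∧ B' ⊆ T.verts ∧
  ∃ hB : B.Nonempty, ¬ Ancestor T (B.max' hB) v ∧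
    ∃ a ∈ B', Ancestor T a v ∧ Ancestor T a (B.max' hB) ∧
      ∀ w, Ancestor T w v → Ancestor T w (B.max' hB) → w ≤ a

/-- The `v`-dependence graph `G_v(T)` is connected: any two blocks of `π`
contained in `V(T)` are related by the equivalence closure of the edge
relation. -/
def DepConnected (π : Finset (Finset ℕ)) (T : ITree) (v : ℕ) : Prop :=
  ∀ B ∈ π, B ⊆ T.verts → ∀ B' ∈ π, B' ⊆ T.verts →
    Relation.EqvGen (DepEdge π T v) B B'

section Aux

variable {T : ITree}

lemma parent_mem_aux (v : ℕ) (hv : v ∈ T.verts) : T.parent v ∈ T.verts := by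
  by_cases h : ∀ u ∈ T.verts, v ≤ u
  · rw [T.parent_root v hv h]; exact hv
  · exact (T.parent_lt v hv h).1

lemma parent_le_aux (v : ℕ) (hv : v ∈ T.verts) : T.parent v ≤ v := by
  by_cases h : ∀ u ∈ T.verts, v ≤ u
  · rw [T.parent_root v hv h]
  · exact le_of_lt (T.parent_lt v hv h).2

lemma iterate_mem_aux (k : ℕ) (v : ℕ) (hv : v ∈ T.verts) :
    T.parent^[k] v ∈ T.verts := by
  induction k generalizing v with
  | zero => simpa using hv
  | succ n ih =>
    rw [Function.iterate_succ_apply]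
    exact ih _ (parent_mem_aux v hv)

lemma iterate_le_aux (k : ℕ) (v : ℕ) (hv : v ∈ T.verts) :
    T.parent^[k] v ≤ v := by
  induction k generalizing v with
  | zero => simp
  | succ n ih =>
    rw [Function.iterate_succ_apply]
    exact le_trans (ih _ (parent_mem_aux v hv)) (parent_le_aux v hv)

lemma ancestor_mem_aux {a v : ℕ} (h : Ancestor T a v) (hv : v ∈ T.verts) :
    a ∈ T.verts := by
  obtain ⟨k, hk⟩ := h
  rw [← hk]; exact iterate_mem_aux k v hv

lemma ancestor_le_aux {a v : ℕ} (h : Ancestor T a v) (hv : v ∈ T.verts) :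
    a ≤ v := by
  obtain ⟨k, hk⟩ := h
  rw [← hk]; exact iterate_le_aux k v hv

lemma ancestor_refl_aux (v : ℕ) : Ancestor T v v := ⟨0, rfl⟩

lemma ancestor_trans_aux {a b v : ℕ} (h1 : Ancestor T a b) (h2 : Ancestor T b v) :
    Ancestor T a v := by
  obtain ⟨k, hk⟩ := h1
  obtain ⟨l, hl⟩ := h2
  exact ⟨k + l, by rw [Function.iterate_add_apply, hl, hk]⟩

lemma ancestor_total_aux {a b v : ℕ} (h1 : Ancestor T a v) (h2 : Ancestor T b v) :
    Ancestor T a b ∨ Ancestor T b a := by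
  obtain ⟨k, hk⟩ := h1
  obtain ⟨l, hl⟩ := h2
  rcases le_total k l with h | h
  · right
    refine ⟨l - k, ?_⟩
    rw [← hk, ← Function.iterate_add_apply, Nat.sub_add_cancel h, hl]
  · left
    refine ⟨k - l, ?_⟩
    rw [← hl, ← Function.iterate_add_apply, Nat.sub_add_cancel h, hk]

/-- If `a ≤ b` are both ancestors of `v ∈ verts`, then `a` is an ancestor of `b`. -/
lemma ancestor_of_le_aux {a b v : ℕ} (hv : v ∈ T.verts) (h1 : Ancestor T a v)
    (h2 : Ancestor T b v) (hab : a ≤ b) : Ancestor T a b := by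
  rcases ancestor_total_aux h1 h2 with h | h
  · exact h
  · have ha : a ∈ T.verts := ancestor_mem_aux h1 hv
    have : b ≤ a := ancestor_le_aux h ha
    have : a = b := le_antisymm hab this
    rw [this]; exact ancestor_refl_aux b

/-- Every vertex has the minimum vertex `1` as an ancestor. -/
lemma ancestor_one_aux (h1 : 1 ∈ T.verts) : ∀ v ∈ T.verts, Ancestor T 1 v := by
  intro v
  induction v using Nat.strong_induction_on with
  | _ v ih =>
    intro hv
    by_cases hmin : ∀ u ∈ T.verts, v ≤ u
    · have hpos := T.pos v hv
      have : v = 1 := le_antisymm (hmin 1 h1) hpos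
      exact ⟨0, by simp [this]⟩
    · obtain ⟨hp, hlt⟩ := T.parent_lt v hv hmin
      obtain ⟨k, hk⟩ := ih _ hlt hp
      exact ⟨k + 1, by rw [Function.iterate_succ_apply]; exact hk⟩

end Aux

/-- **Proposition 3.7 of Féray–Goulden–Lascoux.**  Let `π` be a partition of a
set of positive integers having `{1}` as a block, and let `T` be a
`π`-increasing tree whose vertex set contains `1` and at least one other
element, with maximum vertex `M`.  Then the blocks `{1}` and `π^M` (the block
containing `M`) lie in different connected components of the `M`-dependence
graph `G_M(T)`; in particular `T` is reducible. -/
theorem tree_containing_one_is_reducible (π : Finset (Finset ℕ)) (T : ITree)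
    (hπ : IsPartition π) (h1π : ({1} : Finset ℕ) ∈ π)
    (hT : PiIncreasing π T) (h1 : 1 ∈ T.verts)
    (hcard : ∃ v ∈ T.verts, v ≠ 1)
    (M : ℕ) (hM : M ∈ T.verts) (hMmax : ∀ u ∈ T.verts, u ≤ M) :
    (∀ BM ∈ π, M ∈ BM →
      ¬ Relation.EqvGen (DepEdge π T M) ({1} : Finset ℕ) BM) ∧
    ¬ DepConnected π T M := by
  classical
  -- `M > 1`
  obtain ⟨v0, hv0, hv0ne⟩ := hcard
  have hv0pos := T.pos v0 hv0
  have hM1 : 1 < M := by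
    have := hMmax v0 hv0
    omega
  -- `c` : the smallest ancestor of `M` greater than `1`
  set Cf : Finset ℕ := T.verts.filter (fun a => Ancestor T a M ∧ 1 < a) with hCf_def
  have hMCf : M ∈ Cf := by
    simp only [hCf_def, Finset.mem_filter]
    exact ⟨hM, ancestor_refl_aux M, hM1⟩
  have hCfne : Cf.Nonempty := ⟨M, hMCf⟩
  set c : ℕ := Cf.min' hCfne with hc_def
  have hc : c ∈ Cf := Finset.min'_mem _ _
  rw [hCf_def, Finset.mem_filter] at hc
  obtain ⟨hc_verts, hcM, hc1⟩ := hc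
  -- minimality: any ancestor of `M` below `c` is `1`
  have hcmin : ∀ a, Ancestor T a M → a < c → a = 1 := by
    intro a haM hac
    by_contra hne
    have ha_verts : a ∈ T.verts := ancestor_mem_aux haM hM
    have hapos := T.pos a ha_verts
    have ha1 : 1 < a := by omega
    have : a ∈ Cf := by
      simp only [hCf_def, Finset.mem_filter]
      exact ⟨ha_verts, haM, ha1⟩
    have := Finset.min'_le _ _ this
    omega
  have hnc1 : ¬ Ancestor T c 1 := by
    intro h
    have := ancestor_le_aux h h1
    omega
  -- the separating invariant
  set P : Finset ℕ → Prop :=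
    fun B => ∀ hB : B.Nonempty, Ancestor T c (B.max' hB) with hP_def
  -- `P` is invariant under dependence edges
  have hedge : ∀ B B', DepEdge π T M B B' → (P B ↔ P B') := by
    intro B B' hE
    obtain ⟨hBπ, hB'π, hBs, hB's, hB, hnA, a, haB', haM, haμ, hamax⟩ := hE
    have hB' : B'.Nonempty := ⟨a, haB'⟩
    have ha_verts : a ∈ T.verts := ancestor_mem_aux haM hM
    have hμ'B' : B'.max' hB' ∈ B' := Finset.max'_mem _ _
    have haμ' : Ancestor T a (B'.max' hB') :=
      hT.2 B' hB'π hB's a haB' (B'.max' hB') hμ'B' (Finset.le_max' _ _ haB')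
    constructor
    · intro hPB h'
      have hcμ : Ancestor T c (B.max' hB) := hPB hB
      have hca : c ≤ a := hamax c hcM hcμ
      have hcaA : Ancestor T c a := ancestor_of_le_aux hM hcM haM hca
      exact ancestor_trans_aux hcaA haμ'
    · intro hPB' h'
      have hcμ' : Ancestor T c (B'.max' hB') := hPB' hB'
      rcases lt_or_ge a c with hac | hca
      · -- then `a = 1`, so `B' = {1}` and its max is `1`, contradicting `¬ Ancestor c 1`
        have ha1 : a = 1 := hcmin a haM hac
        have hB'1 : B' = ({1} : Finset ℕ) := by
          by_contra hne
          have hd := hπ.2.2 B' hB'π ({1} : Finset ℕ) h1π hne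
          have : (1 : ℕ) ∈ B' := ha1 ▸ haB'
          exact (Finset.disjoint_left.mp hd this) (by simp)
        have hmax1 : B'.max' hB' = 1 := by
          subst hB'1; simp
        rw [hmax1] at hcμ'
        exact absurd hcμ' hnc1
      · have hcaA : Ancestor T c a := ancestor_of_le_aux hM hcM haM hca
        exact ancestor_trans_aux hcaA haμ
  -- `P` is invariant under the equivalence closure
  have hinv : ∀ B B', Relation.EqvGen (DepEdge π T M) B B' → (P B ↔ P B') := by
    intro B B' h
    induction h with
    | rel x y h => exact hedge x y h
    | refl x => exact Iff.rfl
    | symm x y h ih => exact ih.symm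
    | trans x y z h1 h2 ih1 ih2 => exact ih1.trans ih2
  have hP1 : ¬ P ({1} : Finset ℕ) := by
    intro h
    have := h (by simp)
    simp only [Finset.max'_singleton] at this
    exact hnc1 this
  have hmain : ∀ BM ∈ π, M ∈ BM →
      ¬ Relation.EqvGen (DepEdge π T M) ({1} : Finset ℕ) BM := by
    intro BM hBMπ hMBM hEqv
    -- `BM ⊆ T.verts`
    obtain ⟨B0, hB0π, hMB0, hB0s⟩ := hT.1 M hM
    have hBM0 : BM = B0 := by
      by_contra hne
      have hd := hπ.2.2 BM hBMπ B0 hB0π hne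
      exact (Finset.disjoint_left.mp hd hMBM) hMB0
    have hBMs : BM ⊆ T.verts := hBM0 ▸ hB0s
    have hBMne : BM.Nonempty := ⟨M, hMBM⟩
    have hPBM : P BM := by
      intro h'
      have hmaxM : BM.max' h' = M :=
        le_antisymm (Finset.max'_le _ _ _ fun x hx => hMmax x (hBMs hx))
          (Finset.le_max' _ _ hMBM)
      rw [hmaxM]
      exact hcM
    exact hP1 ((hinv _ _ hEqv).mpr hPBM)
  refine ⟨hmain, ?_⟩
  intro hconn
  obtain ⟨B0, hB0π, hMB0, hB0s⟩ := hT.1 M hM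
  have h1s : ({1} : Finset ℕ) ⊆ T.verts := by
    intro x hx
    simp only [Finset.mem_singleton] at hx
    subst hx; exact h1
  exact hmain B0 hB0π hMB0 (hconn ({1} : Finset ℕ) h1π h1s B0 hB0π hB0s)
end
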